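/- Let M ≥ 2 be an integer and r > 1 a real number. Then the set B = ℕ ∩ ⋃_{j≥1} (M^j r^j, M^j r^{j+1} - j) has positive lower density. -/

import Mathlib

open scoped Classical

noncomputable def lowerDensity (A : Set ℕ) : ℝ :=
  Filter.liminf
    (fun N : ℕ => (((Finset.range (N + 1)).filter (· ∈ A)).card : ℝ) / (N : ℝ))
    Filter.atTop

set_option maxHeartbeats 1000000 in
theorem stmt_3 (M : ℕ) (hM : 2 ≤ M) (r : ℝ) (hr : 1 < r) :
    0 < lowerDensity
      {n : ℕ | ∃ j : ℕ, 1 ≤ j ∧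
        (M : ℝ) ^ j * r ^ j < (n : ℝ) ∧ (n : ℝ) < (M : ℝ) ^ j * r ^ (j + 1) - (j : ℝ)} := by
  have hM1 : (1:ℝ) < (M:ℝ) := by exact_mod_cast lt_of_lt_of_le one_lt_two hM
  have hM0 : (0:ℝ) < (M:ℝ) := lt_trans one_pos hM1
  have hr0 : (0:ℝ) < r := lt_trans one_pos hr
  set A : Set ℕ := {n : ℕ | ∃ j : ℕ, 1 ≤ j ∧
        (M : ℝ) ^ j * r ^ j < (n : ℝ) ∧ (n : ℝ) < (M : ℝ) ^ j * r ^ (j + 1) - (j : ℝ)} with hA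
  set f : ℕ → ℝ := fun N : ℕ =>
      (((Finset.range (N + 1)).filter (· ∈ A)).card : ℝ) / (N : ℝ) with hf
  set c : ℝ := (r - 1) / (2 * M * r ^ 2) with hc_def
  have hc : 0 < c := div_pos (by linarith) (by positivity)
  -- J0 : for j ≥ J0, j + 1 ≤ (r-1)/2 * (M*r)^j
  have hMr1 : 1 < (M:ℝ) * r := by nlinarith
  have hx1 : ((M:ℝ) * r)⁻¹ < 1 := inv_lt_one_of_one_lt₀ hMr1
  have hx0 : (0:ℝ) ≤ ((M:ℝ) * r)⁻¹ := by positivity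
  have htend : Filter.Tendsto (fun j : ℕ => ((j:ℝ) + 1) * (((M:ℝ)*r)⁻¹) ^ j)
      Filter.atTop (nhds 0) := by
    have h1 := tendsto_self_mul_const_pow_of_lt_one hx0 hx1
    have h2 := tendsto_pow_atTop_nhds_zero_of_lt_one hx0 hx1
    have h3 := h1.add h2
    simpa [add_mul, one_mul] using h3
  have hev : ∀ᶠ j : ℕ in Filter.atTop,
      ((j:ℝ) + 1) * (((M:ℝ)*r)⁻¹) ^ j < (r - 1) / 2 :=
    htend.eventually_lt_const (by linarith)
  obtain ⟨J0, hJ0⟩ := Filter.eventually_atTop.mp hev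
  have hJ0' : ∀ j : ℕ, J0 ≤ j → (j:ℝ) + 1 ≤ (r - 1) / 2 * ((M:ℝ)^j * r^j) := by
    intro j hj
    have h := (hJ0 j hj).le
    have hpos : (0:ℝ) < ((M:ℝ) * r) ^ j := by positivity
    have hinv : (((M:ℝ)*r)⁻¹) ^ j * ((M:ℝ)*r) ^ j = 1 := by
      rw [← mul_pow, inv_mul_cancel₀ (by positivity), one_pow]
    have := mul_le_mul_of_nonneg_right h hpos.le
    rw [mul_assoc, hinv, mul_one] at this
    calc (j:ℝ) + 1 ≤ (r-1)/2 * ((M:ℝ)*r)^j := this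
      _ = (r-1)/2 * ((M:ℝ)^j * r^j) := by rw [mul_pow]
  -- main eventual bound
  have key : ∀ᶠ N : ℕ in Filter.atTop, c ≤ f N := by
    have h1 := Filter.eventually_ge_atTop 1
    have h2 := Filter.eventually_ge_atTop (J0 + 1)
    have h3 := Filter.eventually_ge_atTop (⌈(M:ℝ)^(J0+1) * r^(J0+2)⌉₊)
    filter_upwards [h1, h2, h3] with N hN1 hNJ hNc
    have hNpos : (0:ℝ) < (N:ℝ) := by exact_mod_cast hN1
    set Q : ℕ → Prop := fun k => (M:ℝ) ^ k * r ^ (k + 1) ≤ (N : ℝ) with hQ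
    have hQJ : Q (J0 + 1) := by
      rw [hQ]
      have := Nat.ceil_le.mp hNc
      simpa using this
    set j : ℕ := Nat.findGreatest Q N with hj_def
    have hj1 : J0 + 1 ≤ j := Nat.le_findGreatest hNJ hQJ
    have hQj : Q j := Nat.findGreatest_spec hNJ hQJ
    have hLj : (j:ℝ) + 1 ≤ (r - 1) / 2 * ((M:ℝ)^j * r^j) := hJ0' j (by omega)
    have ht0 : (0:ℝ) < (M:ℝ)^j * r^j := by positivity
    -- j < N
    have hjN : j < N := by
      have h2j : (j:ℝ) < (2:ℝ)^j := by exact_mod_cast (Nat.lt_two_pow_self (n := j))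
      have hMj : (2:ℝ)^j ≤ (M:ℝ)^j := by
        apply pow_le_pow_left₀ (by norm_num)
        exact_mod_cast hM
      have hrj : (1:ℝ) ≤ r ^ (j+1) := one_le_pow₀ hr.le
      have : (j:ℝ) < (N:ℝ) := by
        have := hQj
        nlinarith [pow_pos hM0 j]
      exact_mod_cast this
    have hnQ : ¬ Q (j + 1) :=
      Nat.findGreatest_is_greatest (Nat.lt_succ_self j) (by omega)
    have hNlt : (N:ℝ) < (M:ℝ)^(j+1) * r^(j+2) := by
      have := not_le.mp hnQ
      simpa using this
    -- interval endpoints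
    set x : ℝ := (M:ℝ)^j * r^j with hx_def
    set y : ℝ := (M:ℝ)^j * r^(j+1) - (j:ℝ) with hy_def
    have hpow : (M:ℝ)^j * r^(j+1) = x * r := by rw [hx_def, pow_succ]; ring
    have hxy : (r-1)/2 * x ≤ y - x - 1 := by
      rw [hy_def, hpow]; nlinarith
    have hx0' : (0:ℝ) ≤ x := ht0.le
    have hpos2 : (0:ℝ) < (r-1)/2 * x := mul_pos (by linarith) ht0
    have hy0 : (0:ℝ) ≤ y := by linarith
    set a : ℕ := ⌊x⌋₊ with ha_def
    set b : ℕ := ⌈y⌉₊ with hb_def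
    have hax : (a:ℝ) ≤ x := Nat.floor_le hx0'
    have hxa : x < (a:ℝ) + 1 := Nat.lt_floor_add_one x
    have hyb : y ≤ (b:ℝ) := Nat.le_ceil y
    have hby : (b:ℝ) < y + 1 := Nat.ceil_lt_add_one hy0
    have hbN : b ≤ N := by
      rw [hb_def, Nat.ceil_le]
      have hj0 : (0:ℝ) ≤ (j:ℝ) := Nat.cast_nonneg j
      have := hQj
      rw [hy_def]; linarith
    have hab : a + 1 < b := by
      have : (a:ℝ) + 1 < (b:ℝ) := by linarith
      exact_mod_cast this
    -- subset
    have hsub : Finset.Icc (a+1) (b-1) ⊆ (Finset.range (N + 1)).filter (· ∈ A) := by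
      intro n hn
      rw [Finset.mem_Icc] at hn
      obtain ⟨hn1, hn2⟩ := hn
      rw [Finset.mem_filter, Finset.mem_range]
      constructor
      · omega
      · refine ⟨j, by omega, ?_, ?_⟩
        · have : (a:ℝ) + 1 ≤ (n:ℝ) := by exact_mod_cast hn1
          calc (M:ℝ)^j * r^j = x := rfl
            _ < (a:ℝ) + 1 := hxa
            _ ≤ n := this
        · have hnb : n + 1 ≤ b := by omega
          have : (n:ℝ) + 1 ≤ (b:ℝ) := by exact_mod_cast hnb
          show (n:ℝ) < (M:ℝ)^j * r^(j+1) - (j:ℝ)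
          rw [← hy_def]; linarith
    -- counting
    have hcard : ((Finset.range (N + 1)).filter (· ∈ A)).card ≥ b - (a + 1) := by
      have := Finset.card_le_card hsub
      rw [Nat.card_Icc] at this
      omega
    have hcastsub : ((b - (a+1) : ℕ) : ℝ) = (b:ℝ) - (a:ℝ) - 1 := by
      rw [Nat.cast_sub hab.le]; push_cast; ring
    have hcount : (r-1)/2 * x ≤ (((Finset.range (N + 1)).filter (· ∈ A)).card : ℝ) := by
      have h1 : ((b - (a+1) : ℕ) : ℝ) ≤ (((Finset.range (N + 1)).filter (· ∈ A)).card : ℝ) := by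
        exact_mod_cast hcard
      rw [hcastsub] at h1
      have : (r-1)/2 * x ≤ (b:ℝ) - (a:ℝ) - 1 := by linarith
      linarith
    -- conclude
    rw [hf]
    simp only
    rw [le_div_iff₀ hNpos]
    have hcN : c * (N:ℝ) ≤ c * ((M:ℝ)^(j+1) * r^(j+2)) :=
      mul_le_mul_of_nonneg_left hNlt.le hc.le
    have heq : c * ((M:ℝ)^(j+1) * r^(j+2)) = (r-1)/2 * x := by
      rw [hc_def, hx_def]
      have e1 : (M:ℝ)^(j+1) = (M:ℝ)^j * M := pow_succ _ _
      have e2 : r^(j+2) = r^j * r^2 := by rw [pow_add]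
      rw [e1, e2]
      field_simp
    calc c * (N:ℝ) ≤ c * ((M:ℝ)^(j+1) * r^(j+2)) := hcN
      _ = (r-1)/2 * x := heq
      _ ≤ _ := hcount
  -- coboundedness
  have hbound : ∀ᶠ N : ℕ in Filter.atTop, f N ≤ 2 := by
    filter_upwards [Filter.eventually_ge_atTop 1] with N hN1
    have hNpos : (0:ℝ) < (N:ℝ) := by exact_mod_cast hN1
    have hN1' : (1:ℝ) ≤ (N:ℝ) := by exact_mod_cast hN1
    rw [hf]
    simp only
    rw [div_le_iff₀ hNpos]
    have h1 : ((Finset.range (N + 1)).filter (· ∈ A)).card ≤ N + 1 := by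
      calc ((Finset.range (N + 1)).filter (· ∈ A)).card
          ≤ (Finset.range (N + 1)).card := Finset.card_filter_le _ _
        _ = N + 1 := Finset.card_range _
    have : (((Finset.range (N + 1)).filter (· ∈ A)).card : ℝ) ≤ (N:ℝ) + 1 := by
      exact_mod_cast h1
    have : ((N:ℝ) + 1) ≤ 2 * N := by linarith
    have h2 : (((Finset.range (N + 1)).filter (· ∈ A)).card : ℝ) ≤ 2 * N := by
      have : (((Finset.range (N + 1)).filter (· ∈ A)).card : ℝ) ≤ (N:ℝ) + 1 := by
        exact_mod_cast h1
      linarith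
    exact h2
  have hcb : Filter.IsCoboundedUnder (· ≥ ·) Filter.atTop f :=
    Filter.isCoboundedUnder_ge_of_eventually_le Filter.atTop hbound
  exact lt_of_lt_of_le hc (Filter.le_liminf_of_le hcb key)
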